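/- Let a₀, a₁, …, aₙ ∈ ℝmax and b₀, b₁, …, bₙ ∈ 𝔾. A vector x ∈ ℝmaxⁿ satisfies the mixed tropical affine inequality a₀ ⊕ a₁x₁ ⊕ ⋯ ⊕ aₙxₙ ≤𝔾 b₀ ⊕ b₁x₁ ⊕ ⋯ ⊕ bₙxₙ if, and only if, there exists ε > 0 such that max(a₀, a₁ + x₁, …, aₙ + xₙ) ≤ max(b₀(ε), b₁(ε) + x₁, …, bₙ(ε) + xₙ) holds in ℝmax ∪ {+∞}. -/

import Mathlib

attribute [local instance] Classical.propDecidable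

/-- The germ semiring `𝔾 = ℝmax ∪ {+∞} ∪ ℝ⁻`: `negInf` is `-∞`, `fin a` is the
real number `a` (an element of `ℝmax`), `germ a` is the germ `a̲ ∈ ℝ⁻`, and
`posInf` is `+∞`. -/
inductive TGerm where
  | negInf : TGerm
  | fin : ℝ → TGerm
  | germ : ℝ → TGerm
  | posInf : TGerm

namespace TGerm

/-- The modulus `|x| ∈ ℝmax ∪ {+∞} = EReal` of an element of `𝔾`. -/
noncomputable def modulus : TGerm → EReal
  | negInf => ⊥
  | fin a => (a : EReal)
  | germ a => (a : EReal)
  | posInf => ⊤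

/-- Whether `x` belongs to the copy `ℝ⁻` of perturbed reals. -/
def isPert : TGerm → Bool
  | germ _ => true
  | _ => false

/-- The total order `≤𝔾` on `𝔾`: `x ≤𝔾 y` iff `|x| < |y|` when
`x ∈ ℝmax ∪ {+∞}` and `y ∈ ℝ⁻`, and `|x| ≤ |y|` otherwise. -/
def gle (x y : TGerm) : Prop :=
  if isPert x = false ∧ isPert y = true then modulus x < modulus y
  else modulus x ≤ modulus y

/-- The valuation `x(ε) ∈ ℝmax ∪ {+∞} = EReal` of `x ∈ 𝔾` at `ε`. -/
noncomputable def val : TGerm → ℝ → EReal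
  | negInf, _ => ⊥
  | fin a, _ => (a : EReal)
  | germ a, ε => ((a - ε : ℝ) : EReal)
  | posInf, _ => ⊤

/-- The addition `⊕` of `𝔾`: the maximum with respect to `≤𝔾`. -/
noncomputable def add (x y : TGerm) : TGerm := if gle x y then y else x

/-- The minimum with respect to `≤𝔾`. -/
noncomputable def gmin (x y : TGerm) : TGerm := if gle x y then x else y

/-- The tropical sum `⊕ᵢ f i` of a finite family in `𝔾`. -/
noncomputable def gsum {n : ℕ} (f : Fin n → TGerm) : TGerm :=
  (List.ofFn f).foldr add negInf

/-- The minimum (w.r.t. `≤𝔾`) of a finite family in `𝔾`. -/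
noncomputable def ginf {n : ℕ} (f : Fin n → TGerm) : TGerm :=
  (List.ofFn f).foldr gmin posInf

/-- The multiplication `⊗` of `𝔾`. -/
def mul : TGerm → TGerm → TGerm
  | negInf, _ => negInf
  | _, negInf => negInf
  | posInf, _ => posInf
  | _, posInf => posInf
  | fin a, fin b => fin (a + b)
  | fin a, germ b => germ (a + b)
  | germ a, fin b => germ (a + b)
  | germ a, germ b => germ (a + b)

end TGerm

/-- The embedding of `ℝmax = ℝ ∪ {-∞}` into the germ semiring `𝔾`. -/
def toGerm (x : WithBot ℝ) : TGerm := WithBot.recBotCoe TGerm.negInf TGerm.fin x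

/-- The embedding of `ℝmax = ℝ ∪ {-∞}` into `ℝmax ∪ {+∞} = EReal`. -/
noncomputable def rmaxToEReal (x : WithBot ℝ) : EReal :=
  WithBot.recBotCoe ⊥ (fun a : ℝ => (a : EReal)) x

section Aux

open TGerm

/-- Tropical sum of a list in `𝔾`. -/
noncomputable def lsum (l : List TGerm) : TGerm := l.foldr TGerm.add TGerm.negInf

lemma lsum_cons (x : TGerm) (l : List TGerm) : lsum (x :: l) = TGerm.add x (lsum l) := rfl

lemma add_eq_or (x y : TGerm) : TGerm.add x y = x ∨ TGerm.add x y = y := by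
  unfold TGerm.add; split
  · right; rfl
  · left; rfl

lemma gle_mod_le {x y : TGerm} (h : x.gle y) : x.modulus ≤ y.modulus := by
  unfold TGerm.gle at h; split at h
  · exact h.le
  · exact h

lemma not_gle_mod_le {x y : TGerm} (h : ¬ x.gle y) : y.modulus ≤ x.modulus := by
  unfold TGerm.gle at h; split at h
  · push_neg at h; exact h
  · push_neg at h; exact h.le

lemma gle_of_lt {x y : TGerm} (h : x.modulus < y.modulus) : x.gle y := by
  unfold TGerm.gle; split
  · exact h
  · exact h.le

lemma gle_of_le_nonpert {x y : TGerm} (h : x.modulus ≤ y.modulus) (hy : y.isPert = false) :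
    x.gle y := by
  unfold TGerm.gle; split
  · rename_i hc; rw [hy] at hc; exact absurd hc.2 (by simp)
  · exact h

lemma modulus_add (x y : TGerm) : (TGerm.add x y).modulus = max x.modulus y.modulus := by
  unfold TGerm.add; split
  · rename_i h; exact (max_eq_right (gle_mod_le h)).symm
  · rename_i h; exact (max_eq_left (not_gle_mod_le h)).symm

lemma lsum_mem (l : List TGerm) : lsum l = TGerm.negInf ∨ lsum l ∈ l := by
  induction l with
  | nil => left; rfl
  | cons x l ih =>
    rw [lsum_cons]
    rcases add_eq_or x (lsum l) with h | h
    · right; rw [h]; exact List.mem_cons_self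
    · rw [h]
      rcases ih with h2 | h2
      · left; exact h2
      · right; exact List.mem_cons_of_mem _ h2

lemma modulus_lsum (l : List TGerm) :
    (lsum l).modulus = (l.map TGerm.modulus).foldr max ⊥ := by
  induction l with
  | nil => rfl
  | cons x l ih => rw [lsum_cons, modulus_add, ih]; rfl

lemma le_foldr_max {α : Type*} [LinearOrder α] [OrderBot α] {l : List α} {a : α} (h : a ∈ l) :
    a ≤ l.foldr max ⊥ := by
  induction l with
  | nil => simp at h
  | cons x l ih =>
    rcases List.mem_cons.mp h with h | h
    · subst h; exact le_max_left _ _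
    · exact le_trans (ih h) (le_max_right _ _)

lemma foldr_max_le {α : Type*} [LinearOrder α] [OrderBot α] {l : List α} {M : α}
    (h : ∀ a ∈ l, a ≤ M) : l.foldr max ⊥ ≤ M := by
  induction l with
  | nil => simp
  | cons x l ih =>
    simp only [List.foldr_cons]
    exact max_le (h x (by simp)) (ih fun a ha => h a (by simp [ha]))

lemma foldr_max_lt {α : Type*} [LinearOrder α] [OrderBot α] {l : List α} {M : α}
    (hM : ⊥ < M) (h : ∀ a ∈ l, a < M) : l.foldr max ⊥ < M := by
  induction l with
  | nil => simpa
  | cons x l ih =>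
    simp only [List.foldr_cons]
    exact max_lt (h x (by simp)) (ih fun a ha => h a (by simp [ha]))

lemma le_modulus_lsum {l : List TGerm} {c : TGerm} (hc : c ∈ l) :
    c.modulus ≤ (lsum l).modulus := by
  rw [modulus_lsum]
  exact le_foldr_max (List.mem_map_of_mem hc)

lemma pert_lsum {l : List TGerm} (h : (lsum l).isPert = true) :
    ∀ c ∈ l, c.isPert = false → c.modulus < (lsum l).modulus := by
  induction l with
  | nil => exact absurd h (by simp [lsum, TGerm.isPert])
  | cons x l ih =>
    rw [lsum_cons] at *
    by_cases hg : x.gle (lsum l)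
    · have hx : TGerm.add x (lsum l) = lsum l := if_pos hg
      rw [hx] at h ⊢
      intro c hc hcp
      rcases List.mem_cons.mp hc with rfl | hcl
      · unfold TGerm.gle at hg
        rwa [if_pos ⟨hcp, h⟩] at hg
      · exact ih h c hcl hcp
    · have hx : TGerm.add x (lsum l) = x := if_neg hg
      rw [hx] at h ⊢
      intro c hc hcp
      rcases List.mem_cons.mp hc with rfl | hcl
      · rw [h] at hcp; exact absurd hcp (by simp)
      · have h1 : c.modulus ≤ (lsum l).modulus := le_modulus_lsum hcl
        have h2 : (lsum l).modulus < x.modulus := by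
          unfold TGerm.gle at hg
          rw [if_neg (by rw [h]; simp)] at hg
          push_neg at hg; exact hg
        exact lt_of_le_of_lt h1 h2

lemma pert_eq_germ {t : TGerm} (h : t.isPert = true) : ∃ a : ℝ, t = TGerm.germ a := by
  cases t with
  | germ a => exact ⟨a, rfl⟩
  | negInf => exact absurd h (by simp [TGerm.isPert])
  | fin a => exact absurd h (by simp [TGerm.isPert])
  | posInf => exact absurd h (by simp [TGerm.isPert])

lemma val_le_modulus (t : TGerm) {ε : ℝ} (hε : 0 < ε) : t.val ε ≤ t.modulus := by
  cases t with
  | negInf => exact le_refl _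
  | fin a => exact le_refl _
  | posInf => exact le_refl _
  | germ a =>
    show ((a - ε : ℝ) : EReal) ≤ (a : EReal)
    exact_mod_cast (by linarith : a - ε ≤ a)

lemma val_lt_modulus_of_pert {t : TGerm} (h : t.isPert = true) {ε : ℝ} (hε : 0 < ε) :
    t.val ε < t.modulus := by
  obtain ⟨a, rfl⟩ := pert_eq_germ h
  show ((a - ε : ℝ) : EReal) < (a : EReal)
  exact_mod_cast (by linarith : a - ε < a)

lemma val_eq_modulus_of_nonpert {t : TGerm} (h : t.isPert = false) (ε : ℝ) :
    t.val ε = t.modulus := by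
  cases t with
  | negInf => rfl
  | fin a => rfl
  | posInf => rfl
  | germ a => exact absurd h (by simp [TGerm.isPert])

lemma isPert_toGerm (y : WithBot ℝ) : (toGerm y).isPert = false := by
  cases y using WithBot.recBotCoe <;> rfl

lemma modulus_toGerm (y : WithBot ℝ) : (toGerm y).modulus = rmaxToEReal y := by
  cases y using WithBot.recBotCoe <;> rfl

lemma isPert_mul_toGerm (u y : WithBot ℝ) : ((toGerm u).mul (toGerm y)).isPert = false := by
  cases u using WithBot.recBotCoe <;> cases y using WithBot.recBotCoe <;> rfl

lemma modulus_mul_toGerm (u y : WithBot ℝ) :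
    ((toGerm u).mul (toGerm y)).modulus = rmaxToEReal u + rmaxToEReal y := by
  cases u using WithBot.recBotCoe <;> cases y using WithBot.recBotCoe <;>
    simp [toGerm, rmaxToEReal, TGerm.mul, TGerm.modulus]

lemma val_mul_toGerm (t : TGerm) (y : WithBot ℝ) (ε : ℝ) :
    (t.mul (toGerm y)).val ε = t.val ε + rmaxToEReal y := by
  cases t <;> cases y using WithBot.recBotCoe <;>
    simp [toGerm, rmaxToEReal, TGerm.mul, TGerm.val]
  · rename_i a c
    exact_mod_cast (by ring : a + c - ε = a - ε + c)

lemma sup_eq_foldr {n : ℕ} (f : Fin n → EReal) :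
    Finset.univ.sup f = (List.ofFn f).foldr max ⊥ := by
  apply le_antisymm
  · apply Finset.sup_le
    intro i _
    exact le_foldr_max (by rw [List.mem_ofFn]; exact ⟨i, rfl⟩)
  · apply foldr_max_le
    intro a ha
    rw [List.mem_ofFn] at ha
    obtain ⟨i, rfl⟩ := ha
    exact Finset.le_sup (Finset.mem_univ i)

end Aux

theorem statement_4 (n : ℕ) (a₀ : WithBot ℝ) (a : Fin n → WithBot ℝ)
    (b₀ : TGerm) (b : Fin n → TGerm) (x : Fin n → WithBot ℝ) :
    (TGerm.add (toGerm a₀) (TGerm.gsum fun i => (toGerm (a i)).mul (toGerm (x i)))).gle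
      (TGerm.add b₀ (TGerm.gsum fun i => (b i).mul (toGerm (x i))))
    ↔ ∃ ε : ℝ, 0 < ε ∧
        max (rmaxToEReal a₀) (Finset.univ.sup fun i => rmaxToEReal (a i) + rmaxToEReal (x i))
          ≤ max (b₀.val ε) (Finset.univ.sup fun i => (b i).val ε + rmaxToEReal (x i)) := by
  set lA : List TGerm := toGerm a₀ :: List.ofFn (fun i => (toGerm (a i)).mul (toGerm (x i)))
    with hlA
  set lB : List TGerm := b₀ :: List.ofFn (fun i => (b i).mul (toGerm (x i))) with hlB
  have hA : TGerm.add (toGerm a₀) (TGerm.gsum fun i => (toGerm (a i)).mul (toGerm (x i)))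
      = lsum lA := rfl
  have hB : TGerm.add b₀ (TGerm.gsum fun i => (b i).mul (toGerm (x i))) = lsum lB := rfl
  have hlA_nonpert : ∀ c ∈ lA, c.isPert = false := by
    intro c hc
    rcases List.mem_cons.mp hc with rfl | hc
    · exact isPert_toGerm a₀
    · rw [List.mem_ofFn] at hc
      obtain ⟨i, rfl⟩ := hc
      exact isPert_mul_toGerm _ _
  have hA_nonpert : (lsum lA).isPert = false := by
    rcases lsum_mem lA with h | h
    · rw [h]; rfl
    · exact hlA_nonpert _ h
  have hmodA : (lsum lA).modulus =
      max (rmaxToEReal a₀) (Finset.univ.sup fun i => rmaxToEReal (a i) + rmaxToEReal (x i)) := by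
    rw [modulus_lsum, hlA]
    simp only [List.map_cons, List.foldr_cons, modulus_toGerm]
    congr 1
    rw [sup_eq_foldr, List.map_ofFn]
    congr 1
    refine congrArg List.ofFn (funext fun i => ?_)
    exact modulus_mul_toGerm _ _
  have hRHS : ∀ ε : ℝ, max (b₀.val ε) (Finset.univ.sup fun i => (b i).val ε + rmaxToEReal (x i))
      = (lB.map (fun c => c.val ε)).foldr max ⊥ := by
    intro ε
    rw [hlB]
    simp only [List.map_cons, List.foldr_cons]
    congr 1
    rw [sup_eq_foldr, List.map_ofFn]
    congr 1
    refine congrArg List.ofFn (funext fun i => ?_)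
    exact (val_mul_toGerm _ _ _).symm
  rw [hA, hB]
  constructor
  · intro h
    by_cases hBp : (lsum lB).isPert = true
    · have hmem : lsum lB ∈ lB := by
        rcases lsum_mem lB with h0 | h0
        · rw [h0] at hBp; exact absurd hBp (by simp [TGerm.isPert])
        · exact h0
      obtain ⟨β, hβ⟩ := pert_eq_germ hBp
      have hlt : (lsum lA).modulus < (β : EReal) := by
        unfold TGerm.gle at h
        rw [if_pos ⟨hA_nonpert, hBp⟩] at h
        rw [hβ] at h
        exact h
      obtain ⟨r, hr1, hr2⟩ := EReal.exists_between_coe_real hlt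
      have hε : (0 : ℝ) < β - r := by
        have : r < β := by exact_mod_cast hr2
        linarith
      refine ⟨β - r, hε, ?_⟩
      rw [← hmodA, hRHS]
      have hval : (lsum lB).val (β - r) = (r : EReal) := by
        rw [hβ]
        show ((β - (β - r) : ℝ) : EReal) = (r : EReal)
        norm_num
      calc (lsum lA).modulus ≤ (r : EReal) := hr1.le
        _ = (lsum lB).val (β - r) := hval.symm
        _ ≤ (lB.map (fun c => c.val (β - r))).foldr max ⊥ :=
            le_foldr_max (List.mem_map_of_mem hmem)
    · have hmod : (lsum lA).modulus ≤ (lsum lB).modulus := gle_mod_le h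
      refine ⟨1, one_pos, ?_⟩
      rw [← hmodA, hRHS]
      rcases lsum_mem lB with h0 | h0
      · have : (lsum lA).modulus ≤ ⊥ := by rw [h0] at hmod; exact hmod
        exact le_trans this bot_le
      · calc (lsum lA).modulus ≤ (lsum lB).modulus := hmod
          _ = (lsum lB).val 1 := (val_eq_modulus_of_nonpert (by simpa using hBp) 1).symm
          _ ≤ (lB.map (fun c => c.val 1)).foldr max ⊥ :=
              le_foldr_max (List.mem_map_of_mem h0)
  · rintro ⟨ε, hε, hle⟩
    rw [← hmodA, hRHS] at hle
    by_cases hBp : (lsum lB).isPert = true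
    · apply gle_of_lt
      refine lt_of_le_of_lt hle (foldr_max_lt ?_ ?_)
      · obtain ⟨β, hβ⟩ := pert_eq_germ hBp
        rw [hβ]
        exact EReal.bot_lt_coe β
      · intro v hv
        rw [List.mem_map] at hv
        obtain ⟨c, hc, rfl⟩ := hv
        by_cases hcp : c.isPert = true
        · exact lt_of_lt_of_le (val_lt_modulus_of_pert hcp hε) (le_modulus_lsum hc)
        · rw [val_eq_modulus_of_nonpert (by simpa using hcp)]
          exact pert_lsum hBp c hc (by simpa using hcp)
    · apply gle_of_le_nonpert _ (by simpa using hBp)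
      refine le_trans hle (foldr_max_le ?_)
      intro v hv
      rw [List.mem_map] at hv
      obtain ⟨c, hc, rfl⟩ := hv
      exact le_trans (val_le_modulus c hε) (le_modulus_lsum hc)
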